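/- Under the Setup, suppose Assumption 7' holds: for each support point θ* ∈ S(p,Θ_I) there exists c > 0 such that p·t ≤ −c‖t‖ for every t in the linearized cone L(θ*). Then for every support point θ* ∈ S(p,Θ_I), the gradients of the active constraints span ℝ^d, i.e., span{D_j(θ*) : j ∈ J*(θ*)} = ℝ^d. In particular, if J*(θ*) has exactly d elements, then the family {D_j(θ*) : j ∈ J*(θ*)} is linearly independent (the Linear Independence Constraint Qualification holds at θ*). -/
import Mathlib


open Filter Topology Metric RealInnerProductSpace

noncomputable section

/-- The abstract Setup (Assumption 1) of Kaido–Molinari–Stoye: a compact convex parameter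
space `Θ ⊆ ℝ^d` with nonempty interior, `J` continuously differentiable constraint
functions `g j` (inequality constraints for `j < J1`, equality constraints for
`J1 ≤ j`), with (continuous) gradients `D j`, and a direction of projection `p ≠ 0`. -/
structure PISetup (d J J1 : ℕ) where
  Θ : Set (EuclideanSpace ℝ (Fin d))
  g : Fin J → EuclideanSpace ℝ (Fin d) → ℝ
  D : Fin J → EuclideanSpace ℝ (Fin d) → EuclideanSpace ℝ (Fin d)
  p : EuclideanSpace ℝ (Fin d)
  hd : 1 ≤ d
  hJ : 1 ≤ J
  hJ1 : J1 ≤ J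
  compactΘ : IsCompact Θ
  convexΘ : Convex ℝ Θ
  intΘ_nonempty : (interior Θ).Nonempty
  hgrad : ∀ (j : Fin J) (θ : EuclideanSpace ℝ (Fin d)), HasGradientAt (g j) (D j θ) θ
  hgradCont : ∀ j : Fin J, Continuous (D j)
  hp : p ≠ 0

namespace PISetup

variable {d J J1 : ℕ}

/-- The identified set `Θ_I`. -/
def idSet (S : PISetup d J J1) : Set (EuclideanSpace ℝ (Fin d)) :=
  {θ ∈ S.Θ | ∀ j : Fin J, ((j : ℕ) < J1 → S.g j θ ≤ 0) ∧ (J1 ≤ (j : ℕ) → S.g j θ = 0)}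

/-- The support set `S(p, Θ_I)`: the maximizers of `θ ↦ ⟪p, θ⟫` over `Θ_I`. -/
def suppSet (S : PISetup d J J1) : Set (EuclideanSpace ℝ (Fin d)) :=
  {θ ∈ S.idSet | ∀ θ' ∈ S.idSet, ⟪S.p, θ'⟫ ≤ ⟪S.p, θ⟫}

/-- The criterion `Q(θ) = max{0, max_{j< J1} g_j(θ), max_{J1 ≤ j} |g_j(θ)|}`. -/
def crit (S : PISetup d J J1) (θ : EuclideanSpace ℝ (Fin d)) : ℝ :=
  max 0 (⨆ j : Fin J, if (j : ℕ) < J1 then S.g j θ else |S.g j θ|)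

/-- The ball `B(θ*, η) = {θ ∈ Θ : ‖θ - θ*‖ ≤ η}`. -/
def ball (S : PISetup d J J1) (θs : EuclideanSpace ℝ (Fin d)) (η : ℝ) :
    Set (EuclideanSpace ℝ (Fin d)) :=
  {θ ∈ S.Θ | ‖θ - θs‖ ≤ η}

/-- The supporting hyperplane `H(p, Θ_I)`, described relative to a support point `θ*`. -/
def hyper (S : PISetup d J J1) (θs : EuclideanSpace ℝ (Fin d)) :
    Set (EuclideanSpace ℝ (Fin d)) :=
  {θ ∈ S.Θ | ⟪S.p, θ⟫ = ⟪S.p, θs⟫}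

/-- The tangent cone `T(θ*)` to `Θ_I` at `θ*`. -/
def tangentConeAt (S : PISetup d J J1) (θs : EuclideanSpace ℝ (Fin d)) :
    Set (EuclideanSpace ℝ (Fin d)) :=
  insert 0 {t | ∃ u : ℕ → EuclideanSpace ℝ (Fin d),
    (∀ n, u n ∈ S.idSet ∧ u n ≠ θs) ∧ Tendsto u atTop (𝓝 θs) ∧
    Tendsto (fun n => ‖u n - θs‖⁻¹ • (u n - θs)) atTop (𝓝 (‖t‖⁻¹ • t))}

/-- The linearized cone `L(θ*)`. -/
def linConeAt (S : PISetup d J J1) (θs : EuclideanSpace ℝ (Fin d)) :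
    Set (EuclideanSpace ℝ (Fin d)) :=
  {t | (∀ j : Fin J, (j : ℕ) < J1 → S.g j θs = 0 → ⟪S.D j θs, t⟫ ≤ 0) ∧
       (∀ j : Fin J, J1 ≤ (j : ℕ) → ⟪S.D j θs, t⟫ = 0)}

/-- The active set `J*(θ)` of (equality or inequality) constraints. -/
def activeAt (S : PISetup d J J1) (θ : EuclideanSpace ℝ (Fin d)) : Set (Fin J) :=
  {j | ((j : ℕ) < J1 ∧ S.g j θ = 0) ∨ J1 ≤ (j : ℕ)}

end PISetup

/-- Theorem 1, claim 6: Assumption 7′ implies that at every support point the gradients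
of the active constraints span `ℝ^d`; in particular, if there are exactly `d` active
constraints, LICQ holds. -/
theorem assumption7'_implies_span_and_LICQ {d J J1 : ℕ} (S : PISetup d J J1)
    (hIne : S.idSet.Nonempty) (hIint : S.idSet ⊆ interior S.Θ)
    (h7' : ∀ θs ∈ S.suppSet, ∃ c > (0:ℝ),
      ∀ t ∈ S.linConeAt θs, ⟪S.p, t⟫ ≤ -c * ‖t‖) :
    ∀ θs ∈ S.suppSet,
      Submodule.span ℝ ((fun j => S.D j θs) '' S.activeAt θs) = ⊤ ∧
      ((S.activeAt θs).ncard = d →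
        LinearIndependent ℝ (fun j : S.activeAt θs => S.D j θs)) := by
  intro θs hθs
  obtain ⟨c, hc, hcone⟩ := h7' θs hθs
  have hspan : Submodule.span ℝ ((fun j => S.D j θs) '' S.activeAt θs) = ⊤ := by
    rw [← Submodule.orthogonal_eq_bot_iff]
    rw [Submodule.eq_bot_iff]
    intro v hv
    have hvperp : ∀ j ∈ S.activeAt θs, ⟪S.D j θs, v⟫ = 0 := by
      intro j hj
      exact hv (S.D j θs) (Submodule.subset_span ⟨j, hj, rfl⟩)
    have hvL : v ∈ S.linConeAt θs := by
      constructor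
      · intro j hj hg
        exact le_of_eq (hvperp j (Or.inl ⟨hj, hg⟩))
      · intro j hj
        exact hvperp j (Or.inr hj)
    have hvL' : -v ∈ S.linConeAt θs := by
      constructor
      · intro j hj hg
        rw [inner_neg_right, hvperp j (Or.inl ⟨hj, hg⟩)]
        simp
      · intro j hj
        rw [inner_neg_right, hvperp j (Or.inr hj)]
        simp
    have h1 := hcone v hvL
    have h2 := hcone (-v) hvL'
    rw [inner_neg_right, norm_neg] at h2
    have hn : ‖v‖ ≤ 0 := by nlinarith [norm_nonneg v]
    exact norm_le_zero_iff.mp hn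
  refine ⟨hspan, ?_⟩
  intro hcard
  haveI : Fintype (S.activeAt θs) := Fintype.ofFinite _
  have hcard' : Fintype.card (S.activeAt θs) = d := by
    rwa [Set.ncard_eq_toFinset_card', Set.toFinset_card] at hcard
  apply linearIndependent_of_top_le_span_of_card_eq_finrank
  · have heq : (Set.range fun j : S.activeAt θs => S.D (↑j) θs) = (fun j => S.D j θs) '' S.activeAt θs := by
      ext x
      simp [Set.mem_image]
    rw [heq, hspan]
  · rw [hcard', finrank_euclideanSpace, Fintype.card_fin]
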